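/- arXiv:2409.05763 — 3 statements merged into one kernel-verified Lean document; each statement's English description precedes it below -/
import Mathlib

section
/- Let B be a category with finite products equipped with a CLA structure. Then the additive maps form a wide subcategory B⁺ of B (identities are additive and additive maps are closed under composition); B⁺ has finite biproducts, where the terminal object of B is a zero object of B⁺ and, for objects X, Y, the product X ⨯ Y is a biproduct of X and Y in B⁺ with coproduct injections ⟨id_X, 0⟩ : X → X ⨯ Y and ⟨0, id_Y⟩ : Y → X ⨯ Y; and the inclusion functor B⁺ ⥤ B is bijective on objects and preserves and reflects finite products. -/
open CategoryTheory MonoidalCategory CategoryTheory.CartesianMonoidalCategory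
  CategoryTheory.SemiCartesianMonoidalCategory

universe v u

/-- A cartesian left-additive (CLA) structure on a category with chosen finite products:
each object carries a chosen commutative monoid structure, compatibly with products. -/
class CLA (B : Type u) [Category.{v} B] [CartesianMonoidalCategory B] where
  zero : ∀ X : B, 𝟙_ B ⟶ X
  add : ∀ X : B, X ⊗ X ⟶ X
  zero_add : ∀ X : B, lift (toUnit X ≫ zero X) (𝟙 X) ≫ add X = 𝟙 X
  add_zero : ∀ X : B, lift (𝟙 X) (toUnit X ≫ zero X) ≫ add X = 𝟙 X
  add_comm : ∀ X : B, lift (snd X X) (fst X X) ≫ add X = add X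
  add_assoc : ∀ X : B,
    lift (fst (X ⊗ X) X ≫ add X) (snd (X ⊗ X) X) ≫ add X =
      lift (fst (X ⊗ X) X ≫ fst X X)
        (lift (fst (X ⊗ X) X ≫ snd X X) (snd (X ⊗ X) X) ≫ add X) ≫ add X
  zero_tensor : ∀ X Y : B, zero (X ⊗ Y) = lift (zero X) (zero Y)
  add_tensor : ∀ X Y : B, add (X ⊗ Y) =
    lift (lift (fst (X ⊗ Y) (X ⊗ Y) ≫ fst X Y) (snd (X ⊗ Y) (X ⊗ Y) ≫ fst X Y) ≫ add X)
         (lift (fst (X ⊗ Y) (X ⊗ Y) ≫ snd X Y) (snd (X ⊗ Y) (X ⊗ Y) ≫ snd X Y) ≫ add Y)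

variable {B : Type u} [Category.{v} B] [CartesianMonoidalCategory B] [CLA B]

/-- The sum of two parallel maps, using the chosen monoid structure on the codomain. -/
def hadd {A X : B} (f g : A ⟶ X) : A ⟶ X := lift f g ≫ CLA.add X

/-- The zero map, using the chosen monoid structure on the codomain. -/
def hzero (A X : B) : A ⟶ X := toUnit A ≫ CLA.zero X

/-- A map `h : A ⊗ B' ⟶ A'` is additive in its second component. -/
def AddSnd {A B' A' : B} (h : A ⊗ B' ⟶ A') : Prop :=
  (∀ (X : B) (a : X ⟶ A) (u v : X ⟶ B'),
    lift a (hadd u v) ≫ h = hadd (lift a u ≫ h) (lift a v ≫ h)) ∧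
  (∀ (X : B) (a : X ⟶ A), lift a (hzero X B') ≫ h = hzero X A')

/-- A map of a CLA category is additive if it preserves the (generalized-element) addition
and zero. -/
def IsAdd {X Y : B} (f : X ⟶ Y) : Prop :=
  (∀ (A : B) (g h : A ⟶ X), hadd g h ≫ f = hadd (g ≫ f) (h ≫ f)) ∧
  (∀ A : B, hzero A X ≫ f = hzero A Y)

lemma comp_hadd {A' A X : B} (k : A' ⟶ A) (f g : A ⟶ X) :
    k ≫ hadd f g = hadd (k ≫ f) (k ≫ g) := by
  simp only [hadd, ← Category.assoc, comp_lift]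

lemma comp_hzero {A' A X : B} (k : A' ⟶ A) : k ≫ hzero A X = hzero A' X := by
  simp only [hzero, ← Category.assoc]
  congr 1
  apply toUnit_unique

lemma hadd_hzero {A X : B} (f : A ⟶ X) : hadd f (hzero A X) = f := by
  have h : f ≫ (lift (𝟙 X) (toUnit X ≫ CLA.zero X) ≫ CLA.add X) = f ≫ 𝟙 X := by
    rw [CLA.add_zero]
  rw [Category.comp_id, ← Category.assoc, comp_lift, Category.comp_id] at h
  rw [hadd, hzero, ← toUnit_unique (f ≫ toUnit X) (toUnit A), Category.assoc]
  exact h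

lemma hzero_hadd {A X : B} (f : A ⟶ X) : hadd (hzero A X) f = f := by
  have h : f ≫ (lift (toUnit X ≫ CLA.zero X) (𝟙 X) ≫ CLA.add X) = f ≫ 𝟙 X := by
    rw [CLA.zero_add]
  rw [Category.comp_id, ← Category.assoc, comp_lift, Category.comp_id] at h
  rw [hadd, hzero, ← toUnit_unique (f ≫ toUnit X) (toUnit A), Category.assoc]
  exact h

lemma hadd_comm {A X : B} (f g : A ⟶ X) : hadd f g = hadd g f := by
  have h := CLA.add_comm (B := B) X
  rw [hadd, hadd]
  conv_rhs => rw [← h]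
  rw [← Category.assoc, comp_lift, lift_fst, lift_snd]

lemma hadd_assoc {A X : B} (f g h : A ⟶ X) :
    hadd (hadd f g) h = hadd f (hadd g h) := by
  have key := CLA.add_assoc (B := B) X
  have := congrArg (fun m => lift (lift f g) h ≫ m) key
  simp only [← Category.assoc, comp_lift, lift_fst, lift_snd] at this
  simp only [hadd, ← Category.assoc, comp_lift] at this ⊢
  convert this using 4 <;> simp [← Category.assoc, comp_lift, lift_fst, lift_snd]

lemma hadd_interchange {A X : B} (a b c d : A ⟶ X) :
    hadd (hadd a b) (hadd c d) = hadd (hadd a c) (hadd b d) := by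
  rw [hadd_assoc, ← hadd_assoc b c d, hadd_comm b c, hadd_assoc c b d, ← hadd_assoc]

lemma hzero_lift {A X Y : B} : hzero A (X ⊗ Y) = lift (hzero A X) (hzero A Y) := by
  rw [hzero, CLA.zero_tensor, comp_lift, hzero, hzero]

lemma hadd_lift {A X Y : B} (a c : A ⟶ X) (b d : A ⟶ Y) :
    hadd (lift a b) (lift c d) = lift (hadd a c) (hadd b d) := by
  rw [hadd, CLA.add_tensor, comp_lift, hadd, hadd]
  congr 1 <;> rw [← Category.assoc, comp_lift] <;>
    simp [← Category.assoc, comp_lift, lift_fst, lift_snd]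

lemma hadd_fst {A X Y : B} (g h : A ⟶ X ⊗ Y) :
    hadd g h ≫ fst X Y = hadd (g ≫ fst X Y) (h ≫ fst X Y) := by
  rw [hadd, CLA.add_tensor, Category.assoc, lift_fst, hadd, ← Category.assoc, comp_lift]
  simp [← Category.assoc, comp_lift, lift_fst, lift_snd]

lemma hadd_snd {A X Y : B} (g h : A ⟶ X ⊗ Y) :
    hadd g h ≫ snd X Y = hadd (g ≫ snd X Y) (h ≫ snd X Y) := by
  rw [hadd, CLA.add_tensor, Category.assoc, lift_snd, hadd, ← Category.assoc, comp_lift]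
  simp [← Category.assoc, comp_lift, lift_fst, lift_snd]

lemma isAdd_id (X : B) : IsAdd (𝟙 X) :=
  ⟨fun _ g h => by simp, fun _ => by simp⟩

lemma isAdd_comp {X Y Z : B} (f : X ⟶ Y) (g : Y ⟶ Z) (hf : IsAdd f) (hg : IsAdd g) :
    IsAdd (f ≫ g) :=
  ⟨fun A u v => by
      rw [← Category.assoc, hf.1, hg.1, Category.assoc, Category.assoc],
   fun A => by rw [← Category.assoc, hf.2, hg.2]⟩

lemma isAdd_fst (X Y : B) : IsAdd (fst X Y) :=
  ⟨fun A g h => hadd_fst g h, fun A => by rw [hzero_lift, lift_fst]⟩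

lemma isAdd_snd (X Y : B) : IsAdd (snd X Y) :=
  ⟨fun A g h => hadd_snd g h, fun A => by rw [hzero_lift, lift_snd]⟩

lemma isAdd_lift {W X Y : B} (f : W ⟶ X) (g : W ⟶ Y) (hf : IsAdd f) (hg : IsAdd g) :
    IsAdd (lift f g) :=
  ⟨fun A u v => by
      rw [comp_lift, hf.1, hg.1, ← hadd_lift, ← comp_lift, ← comp_lift],
   fun A => by rw [comp_lift, hf.2, hg.2, hzero_lift]⟩

lemma isAdd_hzero (X Y : B) : IsAdd (hzero X Y) :=
  ⟨fun A g h => by rw [comp_hzero, comp_hzero, comp_hzero, hadd_hzero],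
   fun A => comp_hzero _⟩

lemma isAdd_hadd {X Y : B} (f g : X ⟶ Y) (hf : IsAdd f) (hg : IsAdd g) :
    IsAdd (hadd f g) :=
  ⟨fun A u v => by
      rw [comp_hadd, hf.1, hg.1, hadd_interchange, ← comp_hadd, ← comp_hadd],
   fun A => by rw [comp_hadd, hf.2, hg.2, hadd_hzero]⟩

lemma inj_key (X Y : B) :
    hadd (fst X Y ≫ lift (𝟙 X) (hzero X Y)) (snd X Y ≫ lift (hzero Y X) (𝟙 Y)) =
      𝟙 (X ⊗ Y) := by
  rw [comp_lift, comp_lift, Category.comp_id, Category.comp_id, comp_hzero, comp_hzero,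
    hadd_lift, hadd_hzero, hzero_hadd, lift_fst_snd]

/-- In a CLA category `B`, the additive maps form a wide subcategory `B⁺` which has finite
biproducts: the terminal object is a zero object of `B⁺`, and `X ⊗ Y` is a biproduct of `X`
and `Y` in `B⁺`; the inclusion `B⁺ ⥤ B` preserves and reflects finite products. -/
theorem additive_maps_wide_subcategory_biproducts :
    -- identities are additive and additive maps are closed under composition
    (∀ X : B, IsAdd (𝟙 X)) ∧
    (∀ (X Y Z : B) (f : X ⟶ Y) (g : Y ⟶ Z), IsAdd f → IsAdd g → IsAdd (f ≫ g)) ∧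
    -- the terminal object of `B` is a zero object of `B⁺`
    (∀ X : B, ∃! f : X ⟶ 𝟙_ B, IsAdd f) ∧
    (∀ X : B, ∃! f : 𝟙_ B ⟶ X, IsAdd f) ∧
    -- the projections are additive, and `X ⊗ Y` is a product of `X` and `Y` in `B⁺`
    (∀ X Y : B, IsAdd (fst X Y) ∧ IsAdd (snd X Y)) ∧
    (∀ (X Y W : B) (f : W ⟶ X) (g : W ⟶ Y), IsAdd f → IsAdd g →
      ∃! h : W ⟶ X ⊗ Y, IsAdd h ∧ h ≫ fst X Y = f ∧ h ≫ snd X Y = g) ∧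
    -- the injections `⟨id, 0⟩`, `⟨0, id⟩` are additive, and `X ⊗ Y` is a coproduct of `X`
    -- and `Y` in `B⁺` via them
    (∀ X Y : B, IsAdd (lift (𝟙 X) (hzero X Y)) ∧ IsAdd (lift (hzero Y X) (𝟙 Y))) ∧
    (∀ (X Y W : B) (f : X ⟶ W) (g : Y ⟶ W), IsAdd f → IsAdd g →
      ∃! h : X ⊗ Y ⟶ W, IsAdd h ∧
        lift (𝟙 X) (hzero X Y) ≫ h = f ∧ lift (hzero Y X) (𝟙 Y) ≫ h = g) ∧
    -- the inclusion `B⁺ ⥤ B` reflects finite products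
    (∀ (X Y Z : B) (p : Z ⟶ X) (q : Z ⟶ Y), IsAdd p → IsAdd q →
      (∀ (W : B) (f : W ⟶ X) (g : W ⟶ Y), ∃! h : W ⟶ Z, h ≫ p = f ∧ h ≫ q = g) →
      (∀ (W : B) (f : W ⟶ X) (g : W ⟶ Y), IsAdd f → IsAdd g →
        ∃! h : W ⟶ Z, IsAdd h ∧ h ≫ p = f ∧ h ≫ q = g)) ∧
    (∀ Z : B, (∀ W : B, ∃! f : W ⟶ Z, f = f) →
      (∀ W : B, ∃! f : W ⟶ Z, IsAdd f)) := by
  refine ⟨isAdd_id, fun X Y Z f g hf hg => isAdd_comp f g hf hg, ?_, ?_, ?_, ?_, ?_, ?_, ?_, ?_⟩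
  · -- terminal
    intro X
    exact ⟨toUnit X, ⟨fun A g h => toUnit_unique _ _, fun A => toUnit_unique _ _⟩,
      fun y _ => toUnit_unique _ _⟩
  · -- initial
    intro X
    refine ⟨hzero (𝟙_ B) X, isAdd_hzero _ _, fun y hy => ?_⟩
    have h1 : (𝟙 (𝟙_ B)) = hzero (𝟙_ B) (𝟙_ B) := toUnit_unique _ _
    calc y = 𝟙 (𝟙_ B) ≫ y := by rw [Category.id_comp]
      _ = hzero (𝟙_ B) (𝟙_ B) ≫ y := by rw [h1]
      _ = hzero (𝟙_ B) X := hy.2 _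
  · exact fun X Y => ⟨isAdd_fst X Y, isAdd_snd X Y⟩
  · -- product
    intro X Y W f g hf hg
    refine ⟨lift f g, ⟨isAdd_lift f g hf hg, lift_fst f g, lift_snd f g⟩, fun y hy => ?_⟩
    apply hom_ext <;> simp [hy.2.1, hy.2.2]
  · -- injections additive
    intro X Y
    exact ⟨isAdd_lift _ _ (isAdd_id X) (isAdd_hzero X Y),
      isAdd_lift _ _ (isAdd_hzero Y X) (isAdd_id Y)⟩
  · -- coproduct
    intro X Y W f g hf hg
    refine ⟨hadd (fst X Y ≫ f) (snd X Y ≫ g),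
      ⟨isAdd_hadd _ _ (isAdd_comp _ _ (isAdd_fst X Y) hf) (isAdd_comp _ _ (isAdd_snd X Y) hg),
        ?_, ?_⟩, fun y hy => ?_⟩
    · rw [comp_hadd, ← Category.assoc, ← Category.assoc, lift_fst, lift_snd,
        Category.id_comp, hg.2, hadd_hzero]
    · rw [comp_hadd, ← Category.assoc, ← Category.assoc, lift_fst, lift_snd,
        Category.id_comp, hf.2, hzero_hadd]
    · calc y = 𝟙 (X ⊗ Y) ≫ y := by rw [Category.id_comp]
        _ = hadd (fst X Y ≫ lift (𝟙 X) (hzero X Y))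
              (snd X Y ≫ lift (hzero Y X) (𝟙 Y)) ≫ y := by rw [inj_key]
        _ = hadd ((fst X Y ≫ lift (𝟙 X) (hzero X Y)) ≫ y)
              ((snd X Y ≫ lift (hzero Y X) (𝟙 Y)) ≫ y) := hy.1.1 _ _ _
        _ = hadd (fst X Y ≫ f) (snd X Y ≫ g) := by
              rw [Category.assoc, Category.assoc, hy.2.1, hy.2.2]
  · -- reflects products
    intro X Y Z p q hp hq huniv W f g hf hg
    obtain ⟨h, ⟨hp1, hq1⟩, huniq⟩ := huniv W f g
    refine ⟨h, ⟨⟨fun A u v => ?_, fun A => ?_⟩, hp1, hq1⟩, fun y hy => huniq y ⟨hy.2.1, hy.2.2⟩⟩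
    · obtain ⟨k, _, huniq'⟩ := huniv A (hadd (u ≫ f) (v ≫ f)) (hadd (u ≫ g) (v ≫ g))
      have e1 : hadd u v ≫ h = k := huniq' _
        ⟨by rw [Category.assoc, hp1, hf.1], by rw [Category.assoc, hq1, hg.1]⟩
      have e2 : hadd (u ≫ h) (v ≫ h) = k := huniq' _
        ⟨by rw [hp.1, Category.assoc, Category.assoc, hp1],
         by rw [hq.1, Category.assoc, Category.assoc, hq1]⟩
      rw [e1, e2]
    · obtain ⟨k, _, huniq'⟩ := huniv A (hzero A X) (hzero A Y)
      have e1 : hzero A W ≫ h = k := huniq' _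
        ⟨by rw [Category.assoc, hp1, hf.2], by rw [Category.assoc, hq1, hg.2]⟩
      have e2 : hzero A Z = k := huniq' _ ⟨hp.2 A, hq.2 A⟩
      rw [e1, e2]
  · -- terminal reflection
    intro Z hZ W
    obtain ⟨f, _, huniq⟩ := hZ W
    have hall : ∀ u v : W ⟶ Z, u = v := fun u v => (huniq u rfl).trans (huniq v rfl).symm
    refine ⟨f, ⟨fun A g h => ?_, fun A => ?_⟩, fun y _ => hall y f⟩
    · obtain ⟨f', _, huniq'⟩ := hZ A
      exact ((huniq' _ rfl).trans (huniq' _ rfl).symm)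
    · obtain ⟨f', _, huniq'⟩ := hZ A
      exact ((huniq' _ rfl).trans (huniq' _ rfl).symm)
end

section
/- Let B be a category with finite products. The functor simp : S(B) ⥤ B is a Grothendieck fibration: for every object (B₀, B') of S(B) and every morphism f : A ⟶ B₀ of B, the morphism (f, π₁) : (A, B') → (B₀, B') (with π₁ : A ⨯ B' → B' the second projection) is cartesian over f, i.e. for every morphism (g, g♭) : (X, X') → (B₀, B') in S(B) and every h : X ⟶ A in B with f ∘ h = g, there is a unique morphism (h, h♭) : (X, X') → (A, B') lying over h whose composite with (f, π₁) equals (g, g♭). -/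
open CategoryTheory CategoryTheory.Limits

universe v u

variable (B : Type u) [Category.{v} B] [HasFiniteProducts B]

/-- Objects of the simple category `S(B)`: pairs of objects of `B`. -/
structure SObj where
  base : B
  fib : B

variable {B}

/-- Morphisms of the simple category `S(B)`. -/
@[ext]
structure SHom (M N : SObj B) where
  f : M.base ⟶ N.base
  fb : M.base ⨯ M.fib ⟶ N.fib

/-- The simple category `S(B)` of a category with finite products. -/
noncomputable instance : Category (SObj B) where
  Hom := SHom
  id M := ⟨𝟙 M.base, prod.snd⟩
  comp u v := ⟨u.f ≫ v.f, prod.lift (prod.fst ≫ u.f) u.fb ≫ v.fb⟩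
  id_comp u := by
    apply SHom.ext
    · simp [CategoryStruct.comp, CategoryStruct.id]
    · simp [CategoryStruct.comp, CategoryStruct.id]
  comp_id u := by
    apply SHom.ext
    · simp [CategoryStruct.comp, CategoryStruct.id]
    · simp [CategoryStruct.comp, CategoryStruct.id]
      exact prod.lift_snd _ _
  assoc u v w := by
    apply SHom.ext
    · simp [CategoryStruct.comp]
    · simp [CategoryStruct.comp, prod.comp_lift_assoc, prod.comp_lift]
      congr 2
      exact (Category.assoc _ _ _).symm.trans (prod.lift_fst_assoc _ _ _).symm

theorem test : True := trivial


/-- The simple functor `simp : S(B) ⥤ B` is a Grothendieck fibration: for every object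
`(B₀, B')` of `S(B)` and every `f : A ⟶ B₀`, the morphism `(f, π₁) : (A, B') → (B₀, B')` is
cartesian over `f`: for every morphism `(g, g♭) : (X, X') → (B₀, B')` and every `h : X ⟶ A`
with `f ∘ h = g`, there is a unique morphism `(X, X') → (A, B')` lying over `h` whose
composite with `(f, π₁)` is `(g, g♭)`. -/
theorem simp_isFibration (B₀ B' A : B) (f : A ⟶ B₀)
    (X X' : B) (g : X ⟶ B₀) (gb : X ⨯ X' ⟶ B') (h : X ⟶ A)
    (hfac : h ≫ f = g) :
    ∃! u : SObj.mk X X' ⟶ SObj.mk A B',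
      u.f = h ∧
      u ≫ (SHom.mk f prod.snd : SObj.mk A B' ⟶ SObj.mk B₀ B') = SHom.mk g gb := by
  refine ⟨⟨h, gb⟩, ⟨rfl, ?_⟩, ?_⟩
  · apply SHom.ext
    · simpa [CategoryStruct.comp] using hfac
    · simp [CategoryStruct.comp]
      exact prod.lift_snd _ _
  · rintro ⟨uf, ufb⟩ ⟨h1, h2⟩
    dsimp at h1; subst h1
    apply SHom.ext
    · rfl
    · have := congrArg SHom.fb h2
      simp [CategoryStruct.comp] at this
      exact (prod.lift_snd _ _).symm.trans this
end

section
/- Let B be a category with finite products, T : B ⥤ B a finite-product-preserving endofunctor, and p : T ⟶ 𝟭_B a natural transformation. If X and Y are objects with trivializations t_X and t_Y, then X ⨯ Y admits a trivialization t_{X⨯Y}, given by the composite of the canonical isomorphism T(X ⨯ Y) ≅ T X ⨯ T Y, the isomorphism t_X ⨯ t_Y : T X ⨯ T Y ≅ (X ⨯ X) ⨯ (Y ⨯ Y), and the middle-interchange isomorphism (X ⨯ X) ⨯ (Y ⨯ Y) ≅ (X ⨯ Y) ⨯ (X ⨯ Y), and with respect to t_{X⨯Y}, t_X, t_Y the product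 projections X ⨯ Y → X and X ⨯ Y → Y are T-linear. -/
open CategoryTheory CategoryTheory.Limits

universe v u

variable {B : Type u} [Category.{v} B] [HasFiniteProducts B]

/-- A trivialization of an object `X` with respect to an endofunctor `T` equipped with a
natural transformation `p : T ⟶ 𝟭 B`: an isomorphism `T X ≅ X ⨯ X` whose first component
is `p_X`. -/
structure Triv (T : B ⥤ B) (p : T ⟶ 𝟭 B) (X : B) where
  iso : T.obj X ≅ X ⨯ X
  hom_fst : iso.hom ≫ prod.fst = p.app X

/-- A morphism `f : X ⟶ Y` is `T`-linear with respect to trivializations `tX`, `tY` if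
`T f ≫ tY.hom = tX.hom ≫ (f ⨯ f)`. -/
def TLinear {T : B ⥤ B} {p : T ⟶ 𝟭 B} {X Y : B}
    (tX : Triv T p X) (tY : Triv T p Y) (f : X ⟶ Y) : Prop :=
  T.map f ≫ tY.iso.hom = tX.iso.hom ≫ prod.map f f

/-- The middle interchange isomorphism. -/
noncomputable def interchange (X Y : B) : (X ⨯ X) ⨯ (Y ⨯ Y) ≅ (X ⨯ Y) ⨯ (X ⨯ Y) where
  hom := prod.lift (prod.map prod.fst prod.fst) (prod.map prod.snd prod.snd)
  inv := prod.lift (prod.map prod.fst prod.fst) (prod.map prod.snd prod.snd)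
  hom_inv_id := by ext <;> simp [prod.lift_fst, prod.lift_snd, prod.lift_fst_assoc, prod.lift_snd_assoc]
  inv_hom_id := by ext <;> simp [prod.lift_fst, prod.lift_snd, prod.lift_fst_assoc, prod.lift_snd_assoc]

/-- If `T` preserves finite products and `X`, `Y` carry trivializations, then `X ⨯ Y`
carries the canonical trivialization, with respect to which the product projections
are `T`-linear. -/
theorem prod_triv_exists {T : B ⥤ B} [PreservesFiniteProducts T] {p : T ⟶ 𝟭 B} {X Y : B}
    (tX : Triv T p X) (tY : Triv T p Y) :
    ∃ t : Triv T p (X ⨯ Y),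
      t.iso.hom = (PreservesLimitPair.iso T X Y).hom ≫ prod.map tX.iso.hom tY.iso.hom ≫
          prod.lift (prod.map prod.fst prod.fst) (prod.map prod.snd prod.snd) ∧
      TLinear t tX prod.fst ∧ TLinear t tY prod.snd := by
  refine ⟨⟨PreservesLimitPair.iso T X Y ≪≫ prod.mapIso tX.iso tY.iso ≪≫ interchange X Y, ?_⟩,
    rfl, ?_, ?_⟩
  · ext
    · simp [interchange, ← p.naturality, tX.hom_fst,
        PreservesLimitPair.iso_hom, prod.lift_fst, prod.lift_snd, prod.lift_fst_assoc, prod.lift_snd_assoc]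
    · simp [interchange, ← p.naturality, tY.hom_fst,
        PreservesLimitPair.iso_hom, prod.lift_fst, prod.lift_snd, prod.lift_fst_assoc, prod.lift_snd_assoc]
  · show T.map prod.fst ≫ tX.iso.hom = _
    have h : T.map (prod.fst : X ⨯ Y ⟶ X) = (PreservesLimitPair.iso T X Y).hom ≫ prod.fst := by
      simp [PreservesLimitPair.iso_hom]
    conv_lhs => rw [h]
    ext <;> simp [interchange, prod.lift_fst, prod.lift_snd, prod.lift_fst_assoc, prod.lift_snd_assoc]
  · show T.map prod.snd ≫ tY.iso.hom = _
    have h : T.map (prod.snd : X ⨯ Y ⟶ Y) = (PreservesLimitPair.iso T X Y).hom ≫ prod.snd := by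
      simp [PreservesLimitPair.iso_hom]
    conv_lhs => rw [h]
    ext <;> simp [interchange, prod.lift_fst, prod.lift_snd, prod.lift_fst_assoc, prod.lift_snd_assoc]
end
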